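/- Let n ≥ 1, let x_1,…,x_n ∈ [0,1], write f_n(x) = #{1 ≤ k ≤ n : x_k ≤ x}, and suppose x_{n+1} ∈ [0,1] is chosen as a global minimizer over z ∈ [0,1] of z ↦ ∫₀¹ (f_n(x) + 1_{[z,1]}(x) − (n+1)x)² dx. Writing f_{n+1}(x) = f_n(x) + 1_{[x_{n+1},1]}(x), one has ∫₀¹ (f_{n+1}(x) − (n+1)x)² dx ≤ ∫₀¹ (f_n(x) − nx)² dx + 1/3. -/

import Mathlib

/-- The counting function `f_n(x) = #{1 ≤ k ≤ n : x_k ≤ x}`. -/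
noncomputable def countFn (n : ℕ) (xs : Fin n → ℝ) (x : ℝ) : ℕ :=
  (Finset.univ.filter (fun k => xs k ≤ x)).card

open MeasureTheory Set
set_option maxHeartbeats 1000000

lemma countFn_cast_eq (n : ℕ) (xs : Fin n → ℝ) (x : ℝ) :
    (countFn n xs x : ℝ) = ∑ k : Fin n, if xs k ≤ x then (1:ℝ) else 0 := by
  rw [countFn, Finset.card_filter]; push_cast; rfl

lemma countFn_meas (n : ℕ) (xs : Fin n → ℝ) :
    Measurable fun x => (countFn n xs x : ℝ) := by
  simp only [countFn_cast_eq]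
  exact Finset.measurable_sum _ fun k _ =>
    Measurable.ite measurableSet_Ici measurable_const measurable_const

lemma countFn_le (n : ℕ) (xs : Fin n → ℝ) (x : ℝ) : (countFn n xs x : ℝ) ≤ n := by
  have : countFn n xs x ≤ n := by
    simpa [countFn] using Finset.card_filter_le (Finset.univ : Finset (Fin n)) _
  exact_mod_cast this

/-- bounded measurable functions are interval integrable on [0,1] -/
lemma II_of_bdd {f : ℝ → ℝ} (hf : Measurable f) (C : ℝ)
    (hb : ∀ x ∈ Set.Ioc (0:ℝ) 1, |f x| ≤ C) :
    IntervalIntegrable f volume 0 1 := by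
  rw [intervalIntegrable_iff_integrableOn_Ioc_of_le (by norm_num)]
  refine Integrable.mono' (integrable_const C) hf.aestronglyMeasurable ?_
  filter_upwards [ae_restrict_mem measurableSet_Ioc] with x hx
  simpa using hb x hx

lemma II_of_bdd' {f : ℝ → ℝ} (a b : ℝ) (hf : Measurable f) (C : ℝ)
    (hb : ∀ x ∈ Set.uIoc a b, |f x| ≤ C) :
    IntervalIntegrable f volume a b := by
  rw [intervalIntegrable_iff]
  haveI : IsFiniteMeasure (volume.restrict (Set.uIoc a b)) := by
    constructor
    rw [Measure.restrict_apply_univ, Set.uIoc]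
    exact measure_Ioc_lt_top
  refine Integrable.mono' (integrable_const C) hf.aestronglyMeasurable ?_
  filter_upwards [ae_restrict_mem measurableSet_uIoc] with x hx
  simpa using hb x hx

lemma meas_ind (z : ℝ) : Measurable (fun x : ℝ => (if z ≤ x then (1:ℝ) else 0)) :=
  Measurable.ite measurableSet_Ici measurable_const measurable_const

lemma ae_ne (z : ℝ) : ∀ᵐ x : ℝ, x ≠ z := by
  have : (volume : Measure ℝ) {z} = 0 := measure_singleton z
  rw [MeasureTheory.ae_iff]
  simpa using this

lemma indSq (z : ℝ) (hz0 : 0 ≤ z) (hz1 : z ≤ 1) :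
    ∫ x in (0:ℝ)..1, ((if z ≤ x then (1:ℝ) else 0) - x)^2 ≤ 1/3 := by
  set f : ℝ → ℝ := fun x => ((if z ≤ x then (1:ℝ) else 0) - x)^2 with hf
  have hmf : Measurable f := ((meas_ind z).sub measurable_id).pow_const 2
  have hbd : ∀ a b : ℝ, Set.uIoc a b ⊆ Set.Ioc (-1:ℝ) 1 → IntervalIntegrable f volume a b := by
    intro a b hsub
    refine II_of_bdd' a b hmf 4 fun x hx => ?_
    have hx' := hsub hx
    simp only [Set.mem_Ioc] at hx'
    simp only [hf]
    rw [abs_le]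
    constructor <;> split_ifs <;> nlinarith [hx'.1, hx'.2]
  have i1 : IntervalIntegrable f volume 0 z := by
    apply hbd; rw [Set.uIoc_of_le hz0]; intro x hx; exact ⟨by linarith [hx.1], le_trans hx.2 hz1⟩
  have i2 : IntervalIntegrable f volume z 1 := by
    apply hbd; rw [Set.uIoc_of_le hz1]; intro x hx; exact ⟨by linarith [hx.1], hx.2⟩
  have hsplit := intervalIntegral.integral_add_adjacent_intervals i1 i2
  have e1 : ∫ x in (0:ℝ)..z, f x = ∫ x in (0:ℝ)..z, x^2 := by
    apply intervalIntegral.integral_congr_ae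
    filter_upwards [ae_ne z] with x hne hx
    rw [Set.uIoc_of_le hz0] at hx
    have : ¬ z ≤ x := fun h => hne (le_antisymm hx.2 h)
    simp [hf, this]
  have e2 : ∫ x in z..(1:ℝ), f x = ∫ x in z..(1:ℝ), (1 - x)^2 := by
    apply intervalIntegral.integral_congr_ae
    filter_upwards with x hx
    rw [Set.uIoc_of_le hz1] at hx
    have : z ≤ x := le_of_lt hx.1
    simp [hf, this]
  have v1 : ∫ x in (0:ℝ)..z, x^2 = z^3/3 := by
    rw [integral_pow]; norm_num
  have v2 : ∫ x in z..(1:ℝ), (1 - x)^2 = (1-z)^3/3 := by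
    have hfun : (fun x : ℝ => (1 - x)^2) = fun x => x^2 - 2*x + 1 := by funext x; ring
    rw [show (∫ x in z..(1:ℝ), (1 - x)^2) = ∫ x in z..(1:ℝ), (x^2 - 2*x + 1) from by rw [hfun]]
    have h1 : IntervalIntegrable (fun x : ℝ => x^2) volume z 1 :=
      intervalIntegral.intervalIntegrable_pow 2
    have h2 : IntervalIntegrable (fun x : ℝ => 2*x) volume z 1 := by
      simpa using intervalIntegral.intervalIntegrable_id.const_mul (2:ℝ)
    rw [intervalIntegral.integral_add (h1.sub h2) (intervalIntegrable_const (c := (1:ℝ))),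
        intervalIntegral.integral_sub h1 h2, integral_pow,
        show (∫ x in z..(1:ℝ), 2*x) = 2 * ∫ x in z..(1:ℝ), x from
          intervalIntegral.integral_const_mul 2 (fun x => x),
        integral_id, intervalIntegral.integral_const]
    simp only [smul_eq_mul]
    push_cast
    ring
  rw [← hsplit, e1, e2, v1, v2]
  nlinarith [sq_nonneg z, sq_nonneg (1-z), mul_nonneg hz0 (by linarith : (0:ℝ) ≤ 1 - z)]
section helper
variable {g : ℝ → ℝ}

/-- key Fubini identity -/
lemma fubini_key (hg : Measurable g) (C : ℝ) (hb : ∀ x ∈ Set.Ioc (0:ℝ) 1, |g x| ≤ C) :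
    ∫ z in Ioc (0:ℝ) 1, (∫ x in Ioc (0:ℝ) 1, g x * (if z ≤ x then (1:ℝ) else 0))
      = ∫ x in Ioc (0:ℝ) 1, g x * x := by
  set μ := volume.restrict (Ioc (0:ℝ) 1) with hμ
  haveI : IsFiniteMeasure μ := by
    constructor
    rw [hμ, Measure.restrict_apply_univ]
    exact measure_Ioc_lt_top
  set F : ℝ → ℝ → ℝ := fun z x => g x * (if z ≤ x then (1:ℝ) else 0) with hF
  have hmF : Measurable (Function.uncurry F) := by
    apply Measurable.mul
    · exact hg.comp measurable_snd
    · exact Measurable.ite (measurableSet_le measurable_fst measurable_snd)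
        measurable_const measurable_const
  have hae : ∀ᵐ p ∂(μ.prod μ), p.2 ∈ Ioc (0:ℝ) 1 := by
    rw [MeasureTheory.ae_iff]
    have : {p : ℝ × ℝ | ¬ p.2 ∈ Ioc (0:ℝ) 1} = univ ×ˢ (Ioc (0:ℝ) 1)ᶜ := by
      ext p; simp
    rw [this, Measure.prod_prod]
    have : μ ((Ioc (0:ℝ) 1)ᶜ) = 0 := by
      rw [hμ, Measure.restrict_apply (measurableSet_Ioc.compl)]
      simp
    rw [this, mul_zero]
  have hint : Integrable (Function.uncurry F) (μ.prod μ) := by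
    refine Integrable.mono' (integrable_const (|C|)) hmF.aestronglyMeasurable ?_
    filter_upwards [hae] with p hp
    have h1 : |g p.2| ≤ C := hb p.2 hp
    have : |F p.1 p.2| ≤ |g p.2| := by
      rw [hF]; simp only
      split_ifs <;> simp [abs_nonneg]
    simp only [Function.uncurry, Real.norm_eq_abs]
    calc |F p.1 p.2| ≤ |g p.2| := this
    _ ≤ C := h1
    _ ≤ |C| := le_abs_self C
  have hswap := MeasureTheory.integral_integral_swap hint
  rw [hμ] at hswap
  rw [hswap]
  apply setIntegral_congr_fun measurableSet_Ioc
  intro x hx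
  simp only [hF]
  rw [MeasureTheory.integral_const_mul]
  have : ∫ z in Ioc (0:ℝ) 1, (if z ≤ x then (1:ℝ) else 0)
      = ∫ z in Ioc (0:ℝ) 1, (Iic x).indicator (fun _ => (1:ℝ)) z := by
    apply setIntegral_congr_fun measurableSet_Ioc
    intro z _
    by_cases h : z ≤ x <;> simp [indicator, h]
  rw [this, setIntegral_indicator measurableSet_Iic]
  have hset : Ioc (0:ℝ) 1 ∩ Iic x = Ioc 0 x := by
    ext t
    simp only [mem_inter_iff, mem_Ioc, mem_Iic]
    constructor
    · rintro ⟨⟨h1, _⟩, h3⟩; exact ⟨h1, h3⟩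
    · rintro ⟨h1, h2⟩; exact ⟨⟨h1, le_trans h2 hx.2⟩, h2⟩
  rw [hset]
  simp [Real.volume_Ioc, le_of_lt hx.1]

end helper
section helper2
variable {g : ℝ → ℝ}

lemma II_of_bdd2 (hg : Measurable g) (C : ℝ) (hb : ∀ x, |g x| ≤ C + C * |x|)
    (a b : ℝ) : IntervalIntegrable g volume a b := by
  rw [intervalIntegrable_iff]
  haveI : IsFiniteMeasure (volume.restrict (Set.uIoc a b)) := by
    constructor
    rw [Measure.restrict_apply_univ, Set.uIoc]
    exact measure_Ioc_lt_top
  refine Integrable.mono' (integrable_const (C + C * (|a| + |b|))) hg.aestronglyMeasurable ?_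
  filter_upwards [ae_restrict_mem measurableSet_uIoc] with x hx
  have hx1 : x ≤ max a b := le_of_lt hx.1 |>.trans (le_refl _) |> fun _ => hx.2
  have hxa : |x| ≤ |a| + |b| := by
    have h1 : a ⊓ b < x := hx.1
    have h2 : x ≤ a ⊔ b := hx.2
    have hmin : -(|a| + |b|) ≤ a ⊓ b :=
      le_min (by nlinarith [neg_abs_le a, abs_nonneg b])
        (by nlinarith [neg_abs_le b, abs_nonneg a])
    have hmax : a ⊔ b ≤ |a| + |b| :=
      max_le (by nlinarith [le_abs_self a, abs_nonneg b])
        (by nlinarith [le_abs_self b, abs_nonneg a])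
    rw [abs_le]; constructor <;> linarith
  have := hb x
  simp only [Real.norm_eq_abs]
  have hC : 0 ≤ C := by
    have := hb 0
    simp at this
    linarith [abs_nonneg (g 0)]
  calc |g x| ≤ C + C * |x| := hb x
  _ ≤ C + C * (|a| + |b|) := by nlinarith

/-- existence of a good z -/
lemma exists_good_z (hg : Measurable g) (C : ℝ) (hb : ∀ x, |g x| ≤ C + C * |x|) :
    ∃ z ∈ Icc (0:ℝ) 1,
      (∫ x in Ioc (0:ℝ) 1, g x * (if z ≤ x then (1:ℝ) else 0))
        ≤ ∫ x in Ioc (0:ℝ) 1, g x * x := by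
  obtain ⟨c, hc⟩ : ∃ c, c = ∫ x in Ioc (0:ℝ) 1, g x * x := ⟨_, rfl⟩
  set φ : ℝ → ℝ := fun z => ∫ t in z..(1:ℝ), g t with hφ
  have hii : ∀ a b : ℝ, IntervalIntegrable g volume a b := fun a b => II_of_bdd2 hg C hb a b
  have hcont : Continuous φ := by
    have h1 : Continuous fun z => ∫ t in (1:ℝ)..z, g t :=
      intervalIntegral.continuous_primitive (fun a b => hii a b) 1
    have : φ = fun z => -(∫ t in (1:ℝ)..z, g t) := by
      funext z
      exact intervalIntegral.integral_symm 1 z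
    rw [this]
    exact h1.neg
  -- φ z equals the indicator integral for z ∈ [0,1]
  have hrep : ∀ z ∈ Icc (0:ℝ) 1,
      (∫ x in Ioc (0:ℝ) 1, g x * (if z ≤ x then (1:ℝ) else 0)) = φ z := by
    intro z hz
    have e1 : (∫ x in Ioc (0:ℝ) 1, g x * (if z ≤ x then (1:ℝ) else 0))
        = ∫ x in Ioc (0:ℝ) 1, (Ici z).indicator g x := by
      apply setIntegral_congr_fun measurableSet_Ioc
      intro x _
      rw [Set.indicator_apply]
      simp only [mem_Ici]
      split_ifs <;> simp
    rw [e1, setIntegral_indicator measurableSet_Ici]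
    have hae : (Ioc (0:ℝ) 1 ∩ Ici z : Set ℝ) =ᵐ[volume] (Ioc z 1 : Set ℝ) := by
      rw [MeasureTheory.ae_eq_set]
      constructor
      · refine measure_mono_null ?_ (measure_singleton z)
        intro x hx
        simp only [mem_diff, mem_inter_iff, mem_Ioc, mem_Ici, mem_singleton_iff] at hx ⊢
        rcases hx with ⟨⟨⟨_, hx1⟩, hzx⟩, hnot⟩
        by_contra hne
        exact hnot ⟨lt_of_le_of_ne hzx (Ne.symm hne), hx1⟩
      · refine measure_mono_null ?_ (measure_empty (μ := volume))
        intro x hx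
        simp only [mem_diff, mem_inter_iff, mem_Ioc, mem_Ici] at hx
        rcases hx with ⟨⟨hzx, hx1⟩, hnot⟩
        exact absurd ⟨⟨lt_of_le_of_lt hz.1 hzx, hx1⟩, le_of_lt hzx⟩ hnot
    rw [setIntegral_congr_set hae]
    exact (intervalIntegral.integral_of_le hz.2).symm
  -- Fubini gives average of φ equals c
  have hbIoc : ∀ x ∈ Set.Ioc (0:ℝ) 1, |g x| ≤ C + C := by
    intro x hx
    have hC : 0 ≤ C := by
      have := hb 0; simp at this; linarith [abs_nonneg (g 0)]
    calc |g x| ≤ C + C * |x| := hb x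
    _ ≤ C + C := by
      have : |x| ≤ 1 := abs_le.2 ⟨by linarith [hx.1], hx.2⟩
      nlinarith
  have hfub := fubini_key hg (C + C) hbIoc
  have havg : ∫ z in Ioc (0:ℝ) 1, φ z = c := by
    rw [hc, ← hfub]
    apply setIntegral_congr_fun measurableSet_Ioc
    intro z hz
    exact (hrep z ⟨le_of_lt hz.1, hz.2⟩).symm
  -- conclude by contradiction
  by_contra hcon
  push_neg at hcon
  have hpos : ∀ z ∈ Icc (0:ℝ) 1, 0 < φ z - c := by
    intro z hz
    have := hcon z hz
    rw [hrep z hz, ← hc] at this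
    linarith
  have hψcont : Continuous fun z => φ z - c := hcont.sub continuous_const
  have hψint : IntervalIntegrable (fun z => φ z - c) volume 0 1 :=
    (hψcont.intervalIntegrable 0 1)
  have h01 : (0:ℝ) < 1 := one_pos
  have hpos' := intervalIntegral.intervalIntegral_pos_of_pos_on hψint
    (fun x hx => hpos x ⟨le_of_lt hx.1, le_of_lt hx.2⟩) h01
  have hval : (∫ z in (0:ℝ)..1, (φ z - c)) = 0 := by
    rw [intervalIntegral.integral_of_le (le_of_lt h01)]
    rw [integral_sub]
    · rw [havg]
      simp [Real.volume_Ioc]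
    · exact (hcont.integrableOn_Ioc)
    · exact integrableOn_const (by simp [Real.volume_Ioc])
  rw [hval] at hpos'
  exact lt_irrefl 0 hpos'

end helper2


theorem stmt_13 (n : ℕ) (hn : 1 ≤ n) (xs : Fin n → ℝ)
    (hmem : ∀ k, xs k ∈ Set.Icc (0 : ℝ) 1)
    (xnew : ℝ) (hxnew : xnew ∈ Set.Icc (0 : ℝ) 1)
    (hmin : ∀ z ∈ Set.Icc (0 : ℝ) 1,
      (∫ x in (0:ℝ)..1,
          ((countFn n xs x : ℝ) + (if xnew ≤ x then (1:ℝ) else 0)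
            - ((n : ℝ) + 1) * x) ^ 2)
        ≤ ∫ x in (0:ℝ)..1,
            ((countFn n xs x : ℝ) + (if z ≤ x then (1:ℝ) else 0)
              - ((n : ℝ) + 1) * x) ^ 2) :
    (∫ x in (0:ℝ)..1,
        ((countFn n xs x : ℝ) + (if xnew ≤ x then (1:ℝ) else 0)
          - ((n : ℝ) + 1) * x) ^ 2)
      ≤ (∫ x in (0:ℝ)..1, ((countFn n xs x : ℝ) - (n : ℝ) * x) ^ 2) + 1 / 3 := by
  set g : ℝ → ℝ := fun x => (countFn n xs x : ℝ) - (n : ℝ) * x with hgdef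
  have hmg : Measurable g := (countFn_meas n xs).sub (measurable_id.const_mul _)
  have hgb : ∀ x : ℝ, |g x| ≤ (n:ℝ) + (n:ℝ) * |x| := by
    intro x
    have h0 : (0:ℝ) ≤ (countFn n xs x : ℝ) := Nat.cast_nonneg _
    have h1 : (countFn n xs x : ℝ) ≤ n := countFn_le n xs x
    have h2 : (n:ℝ) * x ≤ (n:ℝ) * |x| :=
      mul_le_mul_of_nonneg_left (le_abs_self x) (Nat.cast_nonneg n)
    have h3 : -((n:ℝ) * |x|) ≤ (n:ℝ) * x := by
      have := mul_le_mul_of_nonneg_left (neg_abs_le x) (Nat.cast_nonneg (α := ℝ) n)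
      linarith [this]
    rw [hgdef, abs_le]
    constructor <;> simp only <;> linarith
  obtain ⟨z, hz, hcross0⟩ := exists_good_z hmg (n:ℝ) hgb
  set h : ℝ → ℝ := fun x => (if z ≤ x then (1:ℝ) else 0) - x with hhdef
  have hmh : Measurable h := (meas_ind z).sub measurable_id
  -- bounds on Ioc 0 1
  have hgb1 : ∀ x ∈ Set.Ioc (0:ℝ) 1, |g x| ≤ 2*(n:ℝ) := by
    intro x hx
    have : |x| ≤ 1 := abs_le.2 ⟨by linarith [hx.1], hx.2⟩
    calc |g x| ≤ (n:ℝ) + (n:ℝ)*|x| := hgb x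
    _ ≤ 2*(n:ℝ) := by nlinarith [Nat.cast_nonneg (α := ℝ) n]
  have hhb1 : ∀ x ∈ Set.Ioc (0:ℝ) 1, |h x| ≤ 2 := by
    intro x hx
    rw [hhdef, abs_le]
    constructor <;> simp only <;> split_ifs <;> (try linarith [hx.1, hx.2]) <;>
      linarith [hx.1, hx.2]
  -- interval integrabilities
  have iG2 : IntervalIntegrable (fun x => g x ^ 2) volume 0 1 := by
    refine II_of_bdd (hmg.pow_const 2) (4*(n:ℝ)^2) fun x hx => ?_
    have := hgb1 x hx
    rw [abs_le]
    constructor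
    · nlinarith [sq_nonneg (g x)]
    · nlinarith [abs_nonneg (g x), sq_abs (g x)]
  have iGH : IntervalIntegrable (fun x => g x * h x) volume 0 1 := by
    refine II_of_bdd (hmg.mul hmh) (4*(n:ℝ)) fun x hx => ?_
    have h1 := hgb1 x hx
    have h2 := hhb1 x hx
    rw [abs_mul]
    nlinarith [abs_nonneg (g x), abs_nonneg (h x)]
  have i2GH : IntervalIntegrable (fun x => 2 * (g x * h x)) volume 0 1 := by
    simpa using iGH.const_mul 2
  have iH2 : IntervalIntegrable (fun x => h x ^ 2) volume 0 1 := by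
    refine II_of_bdd (hmh.pow_const 2) 4 fun x hx => ?_
    have := hhb1 x hx
    rw [abs_le]
    constructor
    · nlinarith [sq_nonneg (h x)]
    · nlinarith [abs_nonneg (h x), sq_abs (h x)]
  -- cross term ≤ 0
  have hcross : (∫ x in (0:ℝ)..1, g x * h x) ≤ 0 := by
    have e : (∫ x in (0:ℝ)..1, g x * h x)
        = (∫ x in Set.Ioc (0:ℝ) 1, g x * (if z ≤ x then (1:ℝ) else 0))
          - ∫ x in Set.Ioc (0:ℝ) 1, g x * x := by
      rw [intervalIntegral.integral_of_le zero_le_one]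
      rw [show (fun x => g x * h x) = fun x =>
          g x * (if z ≤ x then (1:ℝ) else 0) - g x * x from by
        funext x; rw [hhdef]; ring]
      apply integral_sub
      · have : IntervalIntegrable (fun x => g x * (if z ≤ x then (1:ℝ) else 0)) volume 0 1 := by
          refine II_of_bdd (hmg.mul (meas_ind z)) (2*(n:ℝ)) fun x hx => ?_
          have h1 := hgb1 x hx
          rw [abs_mul]
          have : |(if z ≤ x then (1:ℝ) else 0)| ≤ 1 := by split_ifs <;> simp
          nlinarith [abs_nonneg (g x)]
        exact (intervalIntegrable_iff_integrableOn_Ioc_of_le zero_le_one).1 this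
      · have : IntervalIntegrable (fun x => g x * x) volume 0 1 := by
          refine II_of_bdd (hmg.mul measurable_id) (2*(n:ℝ)) fun x hx => ?_
          have h1 := hgb1 x hx
          rw [abs_mul]
          have : |x| ≤ 1 := abs_le.2 ⟨by linarith [hx.1], hx.2⟩
          nlinarith [abs_nonneg (g x)]
        exact (intervalIntegrable_iff_integrableOn_Ioc_of_le zero_le_one).1 this
    rw [e]
    linarith
  -- expansion of the z-integral
  have hexp : (∫ x in (0:ℝ)..1,
        ((countFn n xs x : ℝ) + (if z ≤ x then (1:ℝ) else 0) - ((n : ℝ) + 1) * x) ^ 2)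
      = (∫ x in (0:ℝ)..1, g x ^ 2) + 2 * (∫ x in (0:ℝ)..1, g x * h x)
        + ∫ x in (0:ℝ)..1, h x ^ 2 := by
    have e : ∀ x : ℝ, ((countFn n xs x : ℝ) + (if z ≤ x then (1:ℝ) else 0)
          - ((n : ℝ) + 1) * x) ^ 2
        = g x ^ 2 + 2 * (g x * h x) + h x ^ 2 := by
      intro x
      rw [hgdef, hhdef]
      ring
    rw [intervalIntegral.integral_congr (g := fun x => g x ^ 2 + 2 * (g x * h x) + h x ^ 2)
      (fun x _ => e x)]
    rw [intervalIntegral.integral_add (iG2.add i2GH) iH2,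
        intervalIntegral.integral_add iG2 i2GH,
        intervalIntegral.integral_const_mul]
  have hsq := indSq z hz.1 hz.2
  have hIz : (∫ x in (0:ℝ)..1,
        ((countFn n xs x : ℝ) + (if z ≤ x then (1:ℝ) else 0) - ((n : ℝ) + 1) * x) ^ 2)
      ≤ (∫ x in (0:ℝ)..1, g x ^ 2) + 1/3 := by
    rw [hexp]
    have : (∫ x in (0:ℝ)..1, h x ^ 2) ≤ 1/3 := hsq
    linarith
  calc (∫ x in (0:ℝ)..1,
        ((countFn n xs x : ℝ) + (if xnew ≤ x then (1:ℝ) else 0) - ((n : ℝ) + 1) * x) ^ 2)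
      ≤ _ := hmin z hz
  _ ≤ (∫ x in (0:ℝ)..1, g x ^ 2) + 1/3 := hIz
  _ = (∫ x in (0:ℝ)..1, ((countFn n xs x : ℝ) - (n : ℝ) * x) ^ 2) + 1 / 3 := by rw [hgdef]
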